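/- Let N be a lattice and Σ a complete smooth fan in N ⊗ ℝ whose rays are grouped as ρ_{i,j} for 1 ≤ i ≤ s, 1 ≤ j ≤ n_i according to the s distinct classes δ_i of the corresponding divisors in Pic(X), where X is the associated smooth proper toric variety. For a maximal cone σ, let I_σ = { i : some ρ_{i,j} ⊄ σ }. Then for each i ∈ I_σ there is exactly one index j_{i,σ} with ρ_{i,j_{i,σ}} ⊄ σ; moreover #I_σ = rank Pic(X), and for i ∉ I_σ all rays ρ_{i,1},...,ρ_{i,n_i} are contained in σ. -/

import Mathlib

/-- Lemma on grouped rays, part (i): the rays of the fan are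
indexed by pairs `⟨i,j⟩` with `i` the Picard class of the corresponding divisor
(`n i` rays of class `δ i`), and `Out` is the set of rays not contained in a
fixed maximal cone `σ`. By Cox theory, the classes of the rays outside `σ` form a
`ℤ`-basis of `Pic(X) ≅ ℤ^r`. Then: each class index with a ray outside `σ` has
exactly one such ray, `#Out = r = rank Pic(X)`, and for the other class indices
all rays lie in `σ`. -/
theorem stmt_15 (s r : ℕ) (n : Fin s → ℕ)
    (δ : Fin s → (Fin r → ℤ))
    (Out : Finset ((i : Fin s) × Fin (n i)))
    (hindep : LinearIndependent ℤ (fun x : Out => δ x.1.1))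
    (hspan : Submodule.span ℤ (Set.range (fun x : Out => δ x.1.1)) = ⊤) :
    (∀ i : Fin s, (∃ j, (⟨i, j⟩ : (i : Fin s) × Fin (n i)) ∈ Out) →
      ∃! j, (⟨i, j⟩ : (i : Fin s) × Fin (n i)) ∈ Out) ∧
    Out.card = r ∧
    (∀ i : Fin s, ¬ (∃ j, (⟨i, j⟩ : (i : Fin s) × Fin (n i)) ∈ Out) →
      ∀ j, (⟨i, j⟩ : (i : Fin s) × Fin (n i)) ∉ Out) := by
  have hinj := hindep.injective
  refine ⟨?_, ?_, ?_⟩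
  · rintro i ⟨j, hj⟩
    refine ⟨j, hj, fun j' hj' => ?_⟩
    have : (⟨⟨i, j'⟩, hj'⟩ : Out) = ⟨⟨i, j⟩, hj⟩ := by
      apply hinj
      rfl
    have := congrArg (fun x : Out => x.1) this
    simpa using this
  · have b : Module.Basis Out ℤ (Fin r → ℤ) := Module.Basis.mk hindep (by rw [hspan])
    have h1 : Module.finrank ℤ (Fin r → ℤ) = Fintype.card Out :=
      (Module.finrank_eq_card_basis b)
    simpa [Fintype.card_coe] using h1.symm
  · intro i hi j hj
    exact hi ⟨j, hj⟩
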